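/- Let (V,d,b) be an acyclic information network, run the Path-Effect process for T steps with transient initial set A ⊆ V\{d}. Then for every subset C ⊆ V, every non-void node v, and every 0 ≤ t ≤ T: Pr[{ω : P^t_v[0](ω) ∈ C}] = ∑_{u∈C} (b^t) v u, where b^t is the t-th matrix power of b. In particular this probability does not depend on the transient initial set A. -/

import Mathlib

open MeasureTheory

/-- An information network: a finite node set `V` with a distinguished void node `d`
and a row-stochastic weight matrix `b` with entries in `[0,1]` and `b d d = 1`. -/
structure InfoNetwork (V : Type*) [Fintype V] where
  d : V
  b : V → V → ℝ
  b_nonneg : ∀ v u, 0 ≤ b v u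
  b_le_one : ∀ v u, b v u ≤ 1
  row_sum : ∀ v, ∑ u, b v u = 1
  void_loop : b d d = 1

/-- The uniform probability measure on the interval `(0,1)`. -/
noncomputable def unifMeasure : Measure ℝ := volume.restrict (Set.Ioo (0:ℝ) 1)

/-- Product over `V` of uniform measures on `(0,1)`: the distribution of the thresholds. -/
noncomputable def thresholdMeasure (V : Type*) [Fintype V] : Measure (V → ℝ) :=
  Measure.pi fun _ : V => unifMeasure

namespace InfoNetwork

variable {V : Type*} [Fintype V]

/-- The set of active nodes at time `t` under the non-progressive linear threshold model,
with transient initial set `A`, permanent initial set `Ahat` and thresholds `θ`. -/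
noncomputable def activeSet (N : InfoNetwork V) (A Ahat : Set V) (θ : V → ℝ) : ℕ → Set V
  | 0 => A ∪ Ahat
  | t+1 => Ahat ∪
      {v | v ∉ Ahat ∧ θ v ≤ ∑ u, (N.activeSet A Ahat θ t).indicator (N.b v) u}

/-- `E[X^t_v(A,Ahat)]`: the probability (over the random thresholds) that `v` is active
at time `t`. -/
noncomputable def EX (N : InfoNetwork V) (A Ahat : Set V) (t : ℕ) (v : V) : ℝ :=
  (thresholdMeasure V {θ | v ∈ N.activeSet A Ahat θ t}).toReal

/-- The expected influence over the period `[1,T]`. -/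
noncomputable def sigmaBar (N : InfoNetwork V) (T : ℕ) (A Ahat : Set V) : ℝ :=
  (1 / (T : ℝ)) * ∑ t ∈ Finset.Icc 1 T, ∑ v, N.EX A Ahat t v

/-- The edge relation of the directed graph on `V \ {d}`. -/
def edgeRel (N : InfoNetwork V) (v u : V) : Prop :=
  v ≠ N.d ∧ u ≠ N.d ∧ 0 < N.b v u

/-- The network is acyclic if the directed graph on `V \ {d}` has no directed cycle. -/
def Acyclic (N : InfoNetwork V) : Prop :=
  ∀ v, ¬ Relation.TransGen N.edgeRel v v

end InfoNetwork

/-- A real-valued set function `f` is submodular on the ground set `S`. -/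
def SubmodularOn {V : Type*} (S : Set V) (f : Set V → ℝ) : Prop :=
  ∀ A B : Set V, A ⊆ B → B ⊆ S → ∀ w ∈ S, w ∉ B →
    f (insert w B) - f B ≤ f (insert w A) - f A

open scoped Classical in
/-- Inverse-CDF selection: the first element `u` of `s` (in the linear order) at which the
cumulative sum of the probabilities `p` reaches `x`; if there is none, a default value. -/
noncomputable def pick {V : Type*} [LinearOrder V] (s : Finset V) (p : V → ℝ) (x : ℝ)
    (dflt : V) : V :=
  if h : (s.filter fun u => x ≤ ∑ w ∈ s.filter (· ≤ u), p w).Nonempty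
  then (s.filter fun u => x ≤ ∑ w ∈ s.filter (· ≤ u), p w).min' h
  else dflt

open scoped Classical in
/-- The influence paths `P^t_v` of the Path-Effect process: `pePath N T A θ ξ t v j` is the
entry `P^t_v[j]` (entries with `j > t` are junk, set to the void node).  Here `θ` are the
thresholds and `ξ (v, i)` is the auxiliary selection variable of node `v` for time `i + 1`. -/
noncomputable def pePath {V : Type*} [Fintype V] [LinearOrder V] (N : InfoNetwork V)
    (T : ℕ) (A : Set V) (θ : V → ℝ) (ξ : V × Fin T → ℝ) : ℕ → V → ℕ → V
  | 0 => fun v j => if j = 0 then v else N.d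
  | t+1 => fun v j =>
      let prev := pePath N T A θ ξ t
      let At : Finset V := Finset.univ.filter fun u => prev u 0 ∈ A
      let f : ℝ := ∑ u ∈ At, N.b v u
      let x : ℝ := if h : t < T then ξ (v, ⟨t, h⟩) else 0
      let u : V :=
        if θ v ≤ f then
          pick (Finset.univ.filter fun u => 0 < N.b v u ∧ u ∈ At) (fun w => N.b v w / f) x N.d
        else
          pick (Finset.univ.filter fun u => 0 < N.b v u ∧ u ∉ At)
            (fun w => N.b v w / (1 - f)) x N.d
      if j = t + 1 then u else prev u j

/-- The probability measure of the Path-Effect process: product of uniform measures on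
`(0,1)` for the thresholds `θ ∈ (0,1)^V` and for the auxiliary selection variables
`ξ ∈ (0,1)^{V×{1,…,T}}`. -/
noncomputable def peMeasure (V : Type*) [Fintype V] (T : ℕ) :
    MeasureTheory.Measure ((V → ℝ) × (V × Fin T → ℝ)) :=
  (MeasureTheory.Measure.pi fun _ : V => unifMeasure).prod
    (MeasureTheory.Measure.pi fun _ : V × Fin T => unifMeasure)
section PEAux

open MeasureTheory Set

instance : IsProbabilityMeasure unifMeasure := by
  constructor
  rw [unifMeasure, Measure.restrict_apply_univ, Real.volume_Ioo]
  norm_num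

lemma unifMeasure_apply (E : Set ℝ) : unifMeasure E = volume (E ∩ Set.Ioo 0 1) := by
  rw [unifMeasure, Measure.restrict_apply' measurableSet_Ioo]

variable {V : Type*} [Fintype V]

namespace InfoNetwork

lemma b_d_eq (N : InfoNetwork V) {w : V} (hw : w ≠ N.d) : N.b N.d w = 0 := by
  classical
  have h1 : ∑ u, N.b N.d u = 1 := N.row_sum N.d
  have h2 : ∑ u ∈ ({N.d} : Finset V), N.b N.d u = 1 := by simp [N.void_loop]
  have h3 : ∑ u ∈ (Finset.univ \ {N.d} : Finset V), N.b N.d u = 0 := by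
    have := Finset.sum_sdiff (Finset.subset_univ ({N.d} : Finset V)) (f := N.b N.d)
    rw [h2, h1] at this; linarith
  have := (Finset.sum_eq_zero_iff_of_nonneg (fun u _ => N.b_nonneg N.d u)).1 h3 w
    (by simp [hw])
  exact this

/-- positive-weight relation -/
def pr (N : InfoNetwork V) : V → V → Prop := fun a b => 0 < N.b a b

lemma reach_d (N : InfoNetwork V) {w : V} (h : Relation.ReflTransGen N.pr N.d w) :
    w = N.d := by
  induction h with
  | refl => rfl
  | tail _ hbc ih =>
      subst ih
      by_contra hne
      exact absurd (N.b_d_eq hne) (ne_of_gt hbc)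

lemma reach_trans_edge (N : InfoNetwork V) {u w : V}
    (h : Relation.ReflTransGen N.pr u w) (hw : w ≠ N.d) :
    u = w ∨ Relation.TransGen N.edgeRel u w := by
  induction h with
  | refl => exact Or.inl rfl
  | @tail b c hub hbc ih =>
      have hb : b ≠ N.d := by
        rintro rfl
        exact absurd (N.b_d_eq hw) (ne_of_gt hbc)
      have hedge : N.edgeRel b c := ⟨hb, hw, hbc⟩
      rcases ih hb with rfl | h'
      · exact Or.inr (Relation.TransGen.single hedge)
      · exact Or.inr (h'.tail hedge)

/-- If `v ≠ d` and `u` is a positive-weight successor of `v` (or the void node), then `v`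
is not reachable from `u`. -/
lemma not_reach (N : InfoNetwork V) (hacyc : N.Acyclic) {v u : V} (hv : v ≠ N.d)
    (hu : 0 < N.b v u ∨ u = N.d) : ¬ Relation.ReflTransGen N.pr u v := by
  intro h
  rcases hu with hu | rfl
  · by_cases hud : u = N.d
    · subst hud; exact hv (N.reach_d h)
    · rcases N.reach_trans_edge h hv with hEq | h'
      · subst hEq; exact hacyc _ (Relation.TransGen.single ⟨hv, hv, hu⟩)
      · exact hacyc v (h'.head ⟨hv, hud, hu⟩)
  · exact hv (N.reach_d h)

lemma b_self_eq (N : InfoNetwork V) (hacyc : N.Acyclic) {v : V} (hv : v ≠ N.d) :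
    N.b v v = 0 := by
  by_contra h
  have : 0 < N.b v v := lt_of_le_of_ne (N.b_nonneg v v) (Ne.symm h)
  exact hacyc v (Relation.TransGen.single ⟨hv, hv, this⟩)

end InfoNetwork

end PEAux
section PickLemmas
open MeasureTheory Set

variable {V : Type*} [LinearOrder V]

lemma pick_mem_or (s : Finset V) (p : V → ℝ) (x : ℝ) (dflt : V) :
    pick s p x dflt ∈ s ∨ pick s p x dflt = dflt := by
  classical
  rw [pick]
  split_ifs with h
  · left; exact (Finset.mem_filter.1 (Finset.min'_mem _ h)).1
  · right; rfl

lemma pick_eq_iff (s : Finset V) (p : V → ℝ) (x : ℝ) (dflt u : V) :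
    pick s p x dflt = u ↔
      ((¬ ∃ w ∈ s, x ≤ ∑ w' ∈ s.filter (· ≤ w), p w') ∧ dflt = u) ∨
      (u ∈ s ∧ x ≤ ∑ w' ∈ s.filter (· ≤ u), p w' ∧
        ∀ w ∈ s, w < u → ∑ w' ∈ s.filter (· ≤ w), p w' < x) := by
  classical
  rw [pick]
  split_ifs with h
  · constructor
    · rintro rfl
      right
      have hm := Finset.min'_mem _ h
      obtain ⟨hms, hmx⟩ := Finset.mem_filter.1 hm
      refine ⟨hms, hmx, fun w hws hwlt => ?_⟩
      by_contra hc
      push_neg at hc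
      have : Finset.min' _ h ≤ w := Finset.min'_le _ _ (Finset.mem_filter.2 ⟨hws, hc⟩)
      exact absurd (lt_of_le_of_lt this hwlt) (lt_irrefl _)
    · rintro (⟨hne, rfl⟩ | ⟨hus, hxu, hlt⟩)
      · obtain ⟨w, hw⟩ := h
        obtain ⟨hws, hwx⟩ := Finset.mem_filter.1 hw
        exact absurd ⟨w, hws, hwx⟩ hne
      · refine le_antisymm (Finset.min'_le _ _ (Finset.mem_filter.2 ⟨hus, hxu⟩)) ?_
        have hm := Finset.min'_mem _ h
        obtain ⟨hms, hmx⟩ := Finset.mem_filter.1 hm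
        by_contra hc
        push_neg at hc
        exact absurd hmx (not_le.2 (hlt _ hms hc))
  · constructor
    · rintro rfl
      exact Or.inl ⟨fun ⟨w, hws, hwx⟩ => h ⟨w, Finset.mem_filter.2 ⟨hws, hwx⟩⟩, rfl⟩
    · rintro (⟨_, rfl⟩ | ⟨hus, hxu, _⟩)
      · rfl
      · exact absurd ⟨u, Finset.mem_filter.2 ⟨hus, hxu⟩⟩ h

lemma measurableSet_pick_fiber (s : Finset V) (p : V → ℝ) (dflt u : V) :
    MeasurableSet {x : ℝ | pick s p x dflt = u} := by
  classical
  have heq : {x : ℝ | pick s p x dflt = u} =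
      ((⋃ w ∈ s, Set.Iic (∑ w' ∈ s.filter (· ≤ w), p w'))ᶜ ∩ {_x : ℝ | dflt = u}) ∪
      ({_x : ℝ | u ∈ s} ∩ Set.Iic (∑ w' ∈ s.filter (· ≤ u), p w') ∩
        ⋂ w ∈ s.filter (· < u), Set.Ioi (∑ w' ∈ s.filter (· ≤ w), p w')) := by
    ext x
    rw [Set.mem_setOf_eq, pick_eq_iff]
    simp only [Set.mem_union, Set.mem_inter_iff, Set.mem_compl_iff, Set.mem_iUnion,
      Set.mem_iInter, Set.mem_Iic, Set.mem_Ioi, Set.mem_setOf_eq, Finset.mem_filter,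
      exists_prop, not_exists, not_and, not_le, and_assoc]
    tauto
  rw [heq]
  refine MeasurableSet.union (MeasurableSet.inter ?_ (MeasurableSet.const _))
    (MeasurableSet.inter (MeasurableSet.inter (MeasurableSet.const _) measurableSet_Iic) ?_)
  · exact (MeasurableSet.biUnion s.countable_toSet fun w _ => measurableSet_Iic).compl
  · exact MeasurableSet.biInter (s.filter (· < u)).countable_toSet fun w _ => measurableSet_Ioi

lemma unifMeasure_pick_fiber (s : Finset V) (p : V → ℝ) (dflt u : V)
    (hp : ∀ w ∈ s, 0 ≤ p w) (hs : ∑ w ∈ s, p w = 1) :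
    unifMeasure {x : ℝ | pick s p x dflt = u} = ENNReal.ofReal (if u ∈ s then p u else 0) := by
  classical
  have hsne : s.Nonempty := Finset.nonempty_of_sum_ne_zero (by rw [hs]; norm_num)
  set M := s.max' hsne with hM
  have hcM : ∑ w' ∈ s.filter (· ≤ M), p w' = 1 := by
    rw [Finset.filter_true_of_mem (fun w hw => Finset.le_max' s w hw), hs]
  rw [unifMeasure_apply]
  by_cases hu : u ∈ s
  · set a := ∑ w' ∈ s.filter (· < u), p w' with ha
    set cu := ∑ w' ∈ s.filter (· ≤ u), p w' with hcu
    have hsplit : cu = p u + a := by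
      rw [hcu, ha]
      have hins : s.filter (· ≤ u) = insert u (s.filter (· < u)) := by
        ext w
        simp only [Finset.mem_filter, Finset.mem_insert]
        constructor
        · rintro ⟨hws, hwu⟩
          rcases lt_or_eq_of_le hwu with h | h
          · exact Or.inr ⟨hws, h⟩
          · exact Or.inl h
        · rintro (rfl | ⟨hws, hwu⟩)
          · exact ⟨hu, le_refl _⟩
          · exact ⟨hws, le_of_lt hwu⟩
      rw [hins, Finset.sum_insert (by simp)]
    have ha0 : 0 ≤ a := Finset.sum_nonneg fun w hw => hp w (Finset.mem_filter.1 hw).1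
    have hpu0 : 0 ≤ p u := hp u hu
    have hacu : a ≤ cu := by rw [hsplit]; linarith
    have hcu1 : cu ≤ 1 := by
      rw [← hs]
      exact Finset.sum_le_sum_of_subset_of_nonneg (Finset.filter_subset _ _)
        (fun w hw _ => hp w hw)
    have hsub1 : Set.Ioo a cu ⊆ {x : ℝ | pick s p x dflt = u} ∩ Set.Ioo 0 1 := by
      rintro x ⟨hax, hxcu⟩
      refine ⟨?_, lt_of_le_of_lt ha0 hax, lt_of_lt_of_le hxcu hcu1⟩
      rw [Set.mem_setOf_eq, pick_eq_iff]
      refine Or.inr ⟨hu, le_of_lt hxcu, fun w hws hwu => ?_⟩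
      have hle : ∑ w' ∈ s.filter (· ≤ w), p w' ≤ a := by
        rw [ha]
        refine Finset.sum_le_sum_of_subset_of_nonneg (fun w' hw' => ?_)
          (fun w' hw' _ => hp w' (Finset.mem_filter.1 hw').1)
        obtain ⟨hw's, hw'w⟩ := Finset.mem_filter.1 hw'
        exact Finset.mem_filter.2 ⟨hw's, lt_of_le_of_lt hw'w hwu⟩
      exact lt_of_le_of_lt hle hax
    have hsub2 : {x : ℝ | pick s p x dflt = u} ∩ Set.Ioo 0 1 ⊆ Set.Ioc a cu := by
      rintro x ⟨hpick, hx0, hx1⟩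
      rw [Set.mem_setOf_eq, pick_eq_iff] at hpick
      rcases hpick with ⟨hne, _⟩ | ⟨_, hxcu, hlt⟩
      · exact absurd ⟨M, s.max'_mem hsne, by rw [hcM]; exact le_of_lt hx1⟩ hne
      · refine ⟨?_, hxcu⟩
        rcases Finset.eq_empty_or_nonempty (s.filter (· < u)) with hemp | hne
        · rw [ha, hemp, Finset.sum_empty]; exact hx0
        · set m := (s.filter (· < u)).max' hne with hm
          have hmmem := (s.filter (· < u)).max'_mem hne
          obtain ⟨hms, hmu⟩ := Finset.mem_filter.1 hmmem
          have hcm : ∑ w' ∈ s.filter (· ≤ m), p w' < x := hlt m hms hmu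
          have hacm : a ≤ ∑ w' ∈ s.filter (· ≤ m), p w' := by
            rw [ha]
            refine Finset.sum_le_sum_of_subset_of_nonneg (fun w' hw' => ?_)
              (fun w' hw' _ => hp w' (Finset.mem_filter.1 hw').1)
            obtain ⟨hw's, hw'u⟩ := Finset.mem_filter.1 hw'
            exact Finset.mem_filter.2
              ⟨hw's, Finset.le_max' (s.filter (· < u)) w' (Finset.mem_filter.2 ⟨hw's, hw'u⟩)⟩
          exact lt_of_le_of_lt hacm hcm
    have hv1 : volume (Set.Ioo a cu) = ENNReal.ofReal (p u) := by
      rw [Real.volume_Ioo, hsplit]; ring_nf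
    have hv2 : volume (Set.Ioc a cu) = ENNReal.ofReal (p u) := by
      rw [Real.volume_Ioc, hsplit]; ring_nf
    rw [if_pos hu]
    exact le_antisymm (hv2 ▸ measure_mono hsub2) (hv1 ▸ measure_mono hsub1)
  · have hemp : {x : ℝ | pick s p x dflt = u} ∩ Set.Ioo 0 1 = ∅ := by
      ext x
      simp only [Set.mem_inter_iff, Set.mem_setOf_eq, Set.mem_Ioo, Set.mem_empty_iff_false,
        iff_false, not_and]
      intro hpick hx0 hx1
      rw [pick_eq_iff] at hpick
      rcases hpick with ⟨hne, _⟩ | ⟨hus, _, _⟩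
      · exact hne ⟨M, s.max'_mem hsne, by rw [hcM]; exact le_of_lt hx1⟩
      · exact hu hus
    rw [hemp, if_neg hu]
    simp

end PickLemmas
section PathLemmas
open MeasureTheory Set

variable {V : Type*} [Fintype V] [LinearOrder V]

open scoped Classical in
/-- The node picked by `v` given that the relevant active set (the set of active
positive-weight successors of `v`) is `S`, threshold value `a` and selection value `x`. -/
noncomputable def Uof (N : InfoNetwork V) (v : V) (S : Finset V) (a x : ℝ) : V :=
  if a ≤ ∑ w ∈ S, N.b v w then
    pick S (fun w => N.b v w / ∑ w' ∈ S, N.b v w') x N.d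
  else
    pick ((Finset.univ.filter fun w => 0 < N.b v w) \ S)
      (fun w => N.b v w / (1 - ∑ w' ∈ S, N.b v w')) x N.d

lemma Uof_cases (N : InfoNetwork V) (v : V) (S : Finset V) (hS : ∀ w ∈ S, 0 < N.b v w)
    (a x : ℝ) : 0 < N.b v (Uof N v S a x) ∨ Uof N v S a x = N.d := by
  classical
  rw [Uof]
  split_ifs
  · rcases pick_mem_or S _ x N.d with h | h
    · exact Or.inl (hS _ h)
    · exact Or.inr h
  · rcases pick_mem_or ((Finset.univ.filter fun w => 0 < N.b v w) \ S) _ x N.d with h | h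
    · left
      have := (Finset.mem_sdiff.1 h).1
      simpa using this
    · exact Or.inr h

open scoped Classical in
lemma pePath_succ_eq (N : InfoNetwork V) (T : ℕ) (A : Set V) (θ : V → ℝ)
    (ξ : V × Fin T → ℝ) (t : ℕ) (v : V) (j : ℕ) :
    pePath N T A θ ξ (t+1) v j =
      if j = t + 1 then
        Uof N v ((Finset.univ.filter fun w => 0 < N.b v w).filter
            (fun w => pePath N T A θ ξ t w 0 ∈ A)) (θ v)
          (if h : t < T then ξ (v, ⟨t, h⟩) else 0)
      else pePath N T A θ ξ t
        (Uof N v ((Finset.univ.filter fun w => 0 < N.b v w).filter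
            (fun w => pePath N T A θ ξ t w 0 ∈ A)) (θ v)
          (if h : t < T then ξ (v, ⟨t, h⟩) else 0)) j := by
  classical
  simp only [pePath]
  set S := (Finset.univ.filter fun w => 0 < N.b v w).filter
    (fun w => pePath N T A θ ξ t w 0 ∈ A) with hSdef
  have hf : ∑ u ∈ Finset.univ.filter (fun u => pePath N T A θ ξ t u 0 ∈ A), N.b v u
      = ∑ w ∈ S, N.b v w := by
    rw [hSdef, Finset.filter_filter, Finset.sum_filter, Finset.sum_filter]
    refine Finset.sum_congr rfl fun w _ => ?_
    rcases (N.b_nonneg v w).lt_or_eq with hb | hb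
    · simp [hb]
    · simp [← hb]
  have hs1 : (Finset.univ.filter fun u => 0 < N.b v u ∧
      u ∈ Finset.univ.filter (fun w => pePath N T A θ ξ t w 0 ∈ A)) = S := by
    rw [hSdef, Finset.filter_filter]
    ext w
    simp
  have hs2 : (Finset.univ.filter fun u => 0 < N.b v u ∧
      u ∉ Finset.univ.filter (fun w => pePath N T A θ ξ t w 0 ∈ A)) =
      (Finset.univ.filter fun w => 0 < N.b v w) \ S := by
    rw [hSdef, Finset.filter_filter]
    ext w
    simp [Finset.mem_sdiff]
    tauto
  rw [hf, hs1, hs2, Uof]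

lemma pePath_d (N : InfoNetwork V) (T : ℕ) (A : Set V) (θ : V → ℝ)
    (ξ : V × Fin T → ℝ) : ∀ (t : ℕ) (j : ℕ), pePath N T A θ ξ t N.d j = N.d := by
  classical
  intro t
  induction t with
  | zero => intro j; by_cases h : j = 0 <;> simp [pePath, h]
  | succ t ih =>
    intro j
    rw [pePath_succ_eq]
    have hS : ∀ w ∈ (Finset.univ.filter fun w => 0 < N.b N.d w).filter
        (fun w => pePath N T A θ ξ t w 0 ∈ A), 0 < N.b N.d w := by
      intro w hw
      have := (Finset.mem_filter.1 hw).1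
      simpa using this
    have hU : Uof N N.d ((Finset.univ.filter fun w => 0 < N.b N.d w).filter
        (fun w => pePath N T A θ ξ t w 0 ∈ A)) (θ N.d)
        (if h : t < T then ξ (N.d, ⟨t, h⟩) else 0) = N.d := by
      rcases Uof_cases N N.d _ hS (θ N.d) _ with h | h
      · by_contra hne
        exact absurd (N.b_d_eq hne) (ne_of_gt h)
      · exact h
    rw [hU]
    split_ifs
    · rfl
    · exact ih j

lemma pePath_congr (N : InfoNetwork V) (T : ℕ) (A : Set V) {θ θ' : V → ℝ}
    {ξ ξ' : V × Fin T → ℝ} :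
    ∀ (t : ℕ) (u : V),
      (∀ w, Relation.ReflTransGen N.pr u w → θ w = θ' w) →
      (∀ w (i : Fin T), Relation.ReflTransGen N.pr u w → ξ (w, i) = ξ' (w, i)) →
      ∀ j, pePath N T A θ ξ t u j = pePath N T A θ' ξ' t u j := by
  classical
  intro t
  induction t with
  | zero => intro u _ _ j; rfl
  | succ t ih =>
    intro u hθ hξ j
    rw [pePath_succ_eq, pePath_succ_eq]
    have hS : (Finset.univ.filter fun w => 0 < N.b u w).filter
        (fun w => pePath N T A θ ξ t w 0 ∈ A) =
        (Finset.univ.filter fun w => 0 < N.b u w).filter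
        (fun w => pePath N T A θ' ξ' t w 0 ∈ A) := by
      ext w
      simp only [Finset.mem_filter, Finset.mem_univ, true_and]
      constructor
      · rintro ⟨hb, hmem⟩
        have hr : Relation.ReflTransGen N.pr u w := Relation.ReflTransGen.single hb
        rw [← ih w (fun w' hw' => hθ w' (hr.trans hw'))
          (fun w' i hw' => hξ w' i (hr.trans hw')) 0]
        exact ⟨hb, hmem⟩
      · rintro ⟨hb, hmem⟩
        have hr : Relation.ReflTransGen N.pr u w := Relation.ReflTransGen.single hb
        rw [ih w (fun w' hw' => hθ w' (hr.trans hw'))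
          (fun w' i hw' => hξ w' i (hr.trans hw')) 0]
        exact ⟨hb, hmem⟩
    have hx : (if h : t < T then ξ (u, ⟨t, h⟩) else 0) =
        (if h : t < T then ξ' (u, ⟨t, h⟩) else 0) := by
      split_ifs with h
      · exact hξ u ⟨t, h⟩ Relation.ReflTransGen.refl
      · rfl
    rw [hS, hx, hθ u Relation.ReflTransGen.refl]
    set S' := (Finset.univ.filter fun w => 0 < N.b u w).filter
        (fun w => pePath N T A θ' ξ' t w 0 ∈ A) with hS'def
    set U := Uof N u S' (θ' u) (if h : t < T then ξ' (u, ⟨t, h⟩) else 0) with hUdef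
    by_cases hj : j = t + 1
    · simp [hj]
    · simp only [if_neg hj]
      have hScases : ∀ w ∈ S', 0 < N.b u w := by
        intro w hw
        have := (Finset.mem_filter.1 hw).1
        simpa using this
      rcases Uof_cases N u S' hScases (θ' u) _ with h | h
      · have hr : Relation.ReflTransGen N.pr u U := Relation.ReflTransGen.single h
        exact ih U (fun w' hw' => hθ w' (hr.trans hw'))
          (fun w' i hw' => hξ w' i (hr.trans hw')) j
      · rw [hUdef, h, pePath_d, pePath_d]

end PathLemmas
section SliceLemma
open MeasureTheory Set

lemma unifMeasure_Iic {c : ℝ} (h0 : 0 ≤ c) (h1 : c ≤ 1) :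
    unifMeasure (Set.Iic c) = ENNReal.ofReal c := by
  rw [unifMeasure_apply]
  refine le_antisymm ?_ ?_
  · calc volume (Set.Iic c ∩ Set.Ioo 0 1) ≤ volume (Set.Ioc 0 c) :=
        measure_mono (by rintro x ⟨hx, h0x, _⟩; exact ⟨h0x, hx⟩)
    _ = ENNReal.ofReal c := by rw [Real.volume_Ioc, sub_zero]
  · calc ENNReal.ofReal c = volume (Set.Ioo 0 c) := by rw [Real.volume_Ioo, sub_zero]
    _ ≤ _ := measure_mono
        (by rintro x ⟨h0x, hxc⟩; exact ⟨le_of_lt hxc, h0x, lt_of_lt_of_le hxc h1⟩)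

lemma unifMeasure_Ioi {c : ℝ} (h0 : 0 ≤ c) :
    unifMeasure (Set.Ioi c) = ENNReal.ofReal (1 - c) := by
  rw [unifMeasure_apply]
  have : Set.Ioi c ∩ Set.Ioo 0 1 = Set.Ioo c 1 := by
    ext x
    constructor
    · rintro ⟨hx, _, hx1⟩; exact ⟨hx, hx1⟩
    · rintro ⟨hcx, hx1⟩; exact ⟨hcx, lt_of_le_of_lt h0 hcx, hx1⟩
  rw [this, Real.volume_Ioo]

variable {V : Type*} [Fintype V] [LinearOrder V]

open scoped Classical in
lemma Uof_slice (N : InfoNetwork V) (v : V) (S : Finset V)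
    (hS : ∀ w ∈ S, 0 < N.b v w) (u : V) :
    (unifMeasure.prod unifMeasure) {q : ℝ × ℝ | Uof N v S q.1 q.2 = u} =
      ENNReal.ofReal (N.b v u) := by
  set Γ : Finset V := Finset.univ.filter fun w => 0 < N.b v w with hΓ
  have hSΓ : S ⊆ Γ := fun w hw => by simp [hΓ]; exact hS w hw
  set fS : ℝ := ∑ w ∈ S, N.b v w with hfS
  have h0f : 0 ≤ fS := Finset.sum_nonneg fun w _ => N.b_nonneg v w
  have hΓsum : ∑ w ∈ Γ, N.b v w = 1 := by
    rw [hΓ, Finset.sum_filter]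
    rw [← N.row_sum v]
    refine Finset.sum_congr rfl fun w _ => ?_
    rcases (N.b_nonneg v w).lt_or_eq with hb | hb
    · simp [hb]
    · simp [← hb]
  have hf1 : fS ≤ 1 := by
    rw [hfS, ← hΓsum]
    exact Finset.sum_le_sum_of_subset_of_nonneg hSΓ fun w _ _ => N.b_nonneg v w
  have hsdiff : ∑ w ∈ Γ \ S, N.b v w = 1 - fS := by
    have := Finset.sum_sdiff (f := N.b v) hSΓ
    rw [hΓsum] at this
    linarith [this]
  set P1 : Set ℝ := {x | pick S (fun w => N.b v w / fS) x N.d = u} with hP1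
  set P2 : Set ℝ := {x | pick (Γ \ S) (fun w => N.b v w / (1 - fS)) x N.d = u} with hP2
  have hQ : {q : ℝ × ℝ | Uof N v S q.1 q.2 = u} =
      (Set.Iic fS ×ˢ P1) ∪ (Set.Ioi fS ×ˢ P2) := by
    ext ⟨a, x⟩
    by_cases h : a ≤ fS
    · simp [Uof, ← hfS, ← hΓ, h, hP1, not_lt.2 h, Set.mem_prod]
    · simp [Uof, ← hfS, ← hΓ, h, hP2, not_le.1 h, Set.mem_prod]
  have hdisj : Disjoint (Set.Iic fS ×ˢ P1) (Set.Ioi fS ×ˢ P2) := by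
    rw [Set.disjoint_left]
    rintro ⟨a, x⟩ ⟨ha, _⟩ ⟨ha', _⟩
    exact absurd (Set.mem_Ioi.1 ha') (not_lt.2 (Set.mem_Iic.1 ha))
  have hmeas : MeasurableSet (Set.Ioi fS ×ˢ P2) :=
    measurableSet_Ioi.prod (measurableSet_pick_fiber _ _ _ _)
  rw [hQ, measure_union hdisj hmeas, Measure.prod_prod, Measure.prod_prod,
    unifMeasure_Iic h0f hf1, unifMeasure_Ioi h0f]
  have hterm1 : ENNReal.ofReal fS * unifMeasure P1 =
      ENNReal.ofReal (if u ∈ S then N.b v u else 0) := by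
    rcases h0f.lt_or_eq with hpos | hzero
    · rw [hP1, unifMeasure_pick_fiber S _ N.d u
        (fun w hw => div_nonneg (N.b_nonneg v w) h0f)
        (by rw [← Finset.sum_div, ← hfS, div_self hpos.ne'])]
      rw [← ENNReal.ofReal_mul h0f]
      congr 1
      split_ifs with h
      · field_simp
      · simp
    · rw [← hzero]
      simp only [ENNReal.ofReal_zero, zero_mul]
      split_ifs with h
      · exact absurd (hS u h) (by
          have : N.b v u ≤ fS := Finset.single_le_sum (fun w _ => N.b_nonneg v w) h
          rw [← hzero] at this
          linarith)
      · simp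
  have hterm2 : ENNReal.ofReal (1 - fS) * unifMeasure P2 =
      ENNReal.ofReal (if u ∈ Γ \ S then N.b v u else 0) := by
    rcases lt_or_ge fS 1 with hlt | hge
    · have h1f : (0:ℝ) < 1 - fS := by linarith
      rw [hP2, unifMeasure_pick_fiber (Γ \ S) _ N.d u
        (fun w hw => div_nonneg (N.b_nonneg v w) h1f.le)
        (by rw [← Finset.sum_div, hsdiff, div_self h1f.ne'])]
      rw [← ENNReal.ofReal_mul (by linarith)]
      congr 1
      split_ifs with h
      · field_simp
      · simp
    · have h1f : 1 - fS ≤ 0 := by linarith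
      rw [ENNReal.ofReal_eq_zero.2 h1f, zero_mul]
      split_ifs with h
      · have hmem := h
        have hble : N.b v u ≤ 1 - fS := by
          rw [← hsdiff]
          exact Finset.single_le_sum (fun w _ => N.b_nonneg v w) h
        have : 0 < N.b v u := by
          have := (Finset.mem_sdiff.1 h).1
          rw [hΓ] at this
          simpa using this
        exfalso; linarith
      · simp
  rw [hterm1, hterm2]
  by_cases hu1 : u ∈ S
  · have hu2 : u ∉ Γ \ S := fun h => (Finset.mem_sdiff.1 h).2 hu1
    rw [if_pos hu1, if_neg hu2]
    simp
  · by_cases hu2 : u ∈ Γ \ S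
    · rw [if_neg hu1, if_pos hu2]
      simp
    · rw [if_neg hu1, if_neg hu2]
      have hbu : N.b v u = 0 := by
        by_contra hne
        have hpos : 0 < N.b v u := lt_of_le_of_ne (N.b_nonneg v u) (Ne.symm hne)
        have : u ∈ Γ := by rw [hΓ]; simp [hpos]
        exact hu2 (Finset.mem_sdiff.2 ⟨this, hu1⟩)
      rw [hbu]
      simp
end SliceLemma
section MeasLemmas
open MeasureTheory Set

variable {V : Type*} [Fintype V] [LinearOrder V]

lemma measurable_Uof_comp (N : InfoNetwork V) {T : ℕ} (v : V) (S : Finset V) (t : ℕ) (u : V) :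
    MeasurableSet {ω : (V → ℝ) × (V × Fin T → ℝ) |
      Uof N v S (ω.1 v) (if h : t < T then ω.2 (v, ⟨t, h⟩) else 0) = u} := by
  classical
  have hxv : Measurable (fun ω : (V → ℝ) × (V × Fin T → ℝ) =>
      (if h : t < T then ω.2 (v, ⟨t, h⟩) else 0)) := by
    split_ifs with h
    · exact (measurable_pi_apply _).comp measurable_snd
    · exact measurable_const
  have hav : Measurable (fun ω : (V → ℝ) × (V × Fin T → ℝ) => ω.1 v) :=
    (measurable_pi_apply _).comp measurable_fst
  have hrw : {ω : (V → ℝ) × (V × Fin T → ℝ) |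
      Uof N v S (ω.1 v) (if h : t < T then ω.2 (v, ⟨t, h⟩) else 0) = u} =
    ({ω : (V → ℝ) × (V × Fin T → ℝ) | ω.1 v ≤ ∑ w ∈ S, N.b v w} ∩
      ((fun ω : (V → ℝ) × (V × Fin T → ℝ) => if h : t < T then ω.2 (v, ⟨t, h⟩) else 0) ⁻¹'
        {x | pick S (fun w => N.b v w / ∑ w' ∈ S, N.b v w') x N.d = u})) ∪
    ({ω : (V → ℝ) × (V × Fin T → ℝ) | ω.1 v ≤ ∑ w ∈ S, N.b v w}ᶜ ∩
      ((fun ω : (V → ℝ) × (V × Fin T → ℝ) => if h : t < T then ω.2 (v, ⟨t, h⟩) else 0) ⁻¹'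
        {x | pick ((Finset.univ.filter fun w => 0 < N.b v w) \ S)
          (fun w => N.b v w / (1 - ∑ w' ∈ S, N.b v w')) x N.d = u})) := by
    ext ω
    by_cases h : ω.1 v ≤ ∑ w ∈ S, N.b v w <;>
      simp [Uof, h, Set.mem_preimage, Set.mem_setOf_eq]
  rw [hrw]
  exact ((measurableSet_le hav measurable_const).inter
      (hxv (measurableSet_pick_fiber _ _ _ _))).union
    (((measurableSet_le hav measurable_const).compl).inter
      (hxv (measurableSet_pick_fiber _ _ _ _)))

open scoped Classical in
lemma measurableSet_pePath_fiber (N : InfoNetwork V) (T : ℕ) (A : Set V) :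
    ∀ (t : ℕ) (v : V) (j : ℕ) (u : V),
      MeasurableSet {ω : (V → ℝ) × (V × Fin T → ℝ) | pePath N T A ω.1 ω.2 t v j = u} := by
  intro t
  induction t with
  | zero =>
    intro v j u
    by_cases h : (if j = 0 then v else N.d) = u
    · have : {ω : (V → ℝ) × (V × Fin T → ℝ) | pePath N T A ω.1 ω.2 0 v j = u} = Set.univ := by
        ext ω; simpa [pePath] using h
      rw [this]; exact MeasurableSet.univ
    · have : {ω : (V → ℝ) × (V × Fin T → ℝ) | pePath N T A ω.1 ω.2 0 v j = u} = ∅ := by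
        ext ω; simpa [pePath] using h
      rw [this]; exact MeasurableSet.empty
  | succ t ih =>
    intro v j u
    have hmemA : ∀ w : V, MeasurableSet
        {ω : (V → ℝ) × (V × Fin T → ℝ) | pePath N T A ω.1 ω.2 t w 0 ∈ A} := by
      intro w
      have : {ω : (V → ℝ) × (V × Fin T → ℝ) | pePath N T A ω.1 ω.2 t w 0 ∈ A} =
          ⋃ (a : V) (_ : a ∈ A), {ω : (V → ℝ) × (V × Fin T → ℝ) |
            pePath N T A ω.1 ω.2 t w 0 = a} := by
        ext ω
        simp only [Set.mem_iUnion, Set.mem_setOf_eq, exists_prop]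
        constructor
        · intro h; exact ⟨_, h, rfl⟩
        · rintro ⟨a, ha, hh⟩; rw [hh]; exact ha
      rw [this]
      exact MeasurableSet.iUnion fun a => MeasurableSet.iUnion fun _ => ih w 0 a
    have hSf : ∀ S : Finset V, MeasurableSet {ω : (V → ℝ) × (V × Fin T → ℝ) |
        (Finset.univ.filter fun w => 0 < N.b v w).filter
          (fun w => pePath N T A ω.1 ω.2 t w 0 ∈ A) = S} := by
      intro S
      have : {ω : (V → ℝ) × (V × Fin T → ℝ) |
          (Finset.univ.filter fun w => 0 < N.b v w).filter
            (fun w => pePath N T A ω.1 ω.2 t w 0 ∈ A) = S} =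
          ⋂ w : V, {ω : (V → ℝ) × (V × Fin T → ℝ) |
            ((0 < N.b v w ∧ pePath N T A ω.1 ω.2 t w 0 ∈ A) ↔ w ∈ S)} := by
        ext ω
        simp only [Set.mem_iInter, Set.mem_setOf_eq, Finset.ext_iff, Finset.mem_filter,
          Finset.mem_univ, true_and]
      rw [this]
      refine MeasurableSet.iInter fun w => ?_
      by_cases hb : 0 < N.b v w <;> by_cases hw : w ∈ S
      · simp only [hb, hw, true_and, iff_true]
        exact hmemA w
      · simp only [hb, hw, true_and, iff_false]
        exact (hmemA w).compl
      · simp only [hb, hw, false_and, false_iff, iff_true]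
        · have : {ω : (V → ℝ) × (V × Fin T → ℝ) | False ↔ True} = ∅ := by simp
          simp only [iff_true] at *
          have : {_ω : (V → ℝ) × (V × Fin T → ℝ) | False} = ∅ := by simp
          rw [show {ω : (V → ℝ) × (V × Fin T → ℝ) | False} = (∅ : Set _) from this]
          exact MeasurableSet.empty
      · simp only [hb, hw, false_and, false_iff, iff_false, not_false_iff]
        have : {_ω : (V → ℝ) × (V × Fin T → ℝ) | True} = Set.univ := by simp
        rw [this]; exact MeasurableSet.univ
    have hrw : {ω : (V → ℝ) × (V × Fin T → ℝ) | pePath N T A ω.1 ω.2 (t+1) v j = u} =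
        ⋃ S : Finset V,
          ({ω : (V → ℝ) × (V × Fin T → ℝ) |
            (Finset.univ.filter fun w => 0 < N.b v w).filter
              (fun w => pePath N T A ω.1 ω.2 t w 0 ∈ A) = S} ∩
           {ω : (V → ℝ) × (V × Fin T → ℝ) |
            (if j = t + 1 then Uof N v S (ω.1 v) (if h : t < T then ω.2 (v, ⟨t, h⟩) else 0)
             else pePath N T A ω.1 ω.2 t
               (Uof N v S (ω.1 v) (if h : t < T then ω.2 (v, ⟨t, h⟩) else 0)) j) = u}) := by
      ext ω
      simp only [Set.mem_iUnion, Set.mem_inter_iff, Set.mem_setOf_eq]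
      constructor
      · intro h
        refine ⟨_, rfl, ?_⟩
        rw [← pePath_succ_eq]
        exact h
      · rintro ⟨S, hs, h⟩
        rw [pePath_succ_eq, hs]
        exact h
    rw [hrw]
    refine MeasurableSet.iUnion fun S => (hSf S).inter ?_
    by_cases hj : j = t + 1
    · simp only [hj, if_pos rfl]
      simp only [if_true]
      exact measurable_Uof_comp N v S t u
    · simp only [if_neg hj]
      have : {ω : (V → ℝ) × (V × Fin T → ℝ) |
          pePath N T A ω.1 ω.2 t
            (Uof N v S (ω.1 v) (if h : t < T then ω.2 (v, ⟨t, h⟩) else 0)) j = u} =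
          ⋃ w : V, ({ω : (V → ℝ) × (V × Fin T → ℝ) |
              Uof N v S (ω.1 v) (if h : t < T then ω.2 (v, ⟨t, h⟩) else 0) = w} ∩
            {ω : (V → ℝ) × (V × Fin T → ℝ) | pePath N T A ω.1 ω.2 t w j = u}) := by
        ext ω
        simp only [Set.mem_iUnion, Set.mem_inter_iff, Set.mem_setOf_eq]
        constructor
        · intro h; exact ⟨_, rfl, h⟩
        · rintro ⟨w, hw, h⟩; rw [hw]; exact h
      rw [this]
      exact MeasurableSet.iUnion fun w =>
        (measurable_Uof_comp N v S t w).inter (ih w j u)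

end MeasLemmas
section SplitLemmas
open MeasureTheory Set

instance uniqueEqSubtype {ι : Type*} (i0 : ι) : Unique { i : ι // i = i0 } where
  default := ⟨i0, rfl⟩
  uniq := fun ⟨_, hi⟩ => Subtype.ext hi

open scoped Classical in
/-- Reassemble a function from the value of one coordinate and the rest. -/
noncomputable def splitMap {ι : Type*} (i0 : ι) :
    ℝ × ({ i : ι // ¬ i = i0 } → ℝ) → (ι → ℝ) :=
  fun p => (MeasurableEquiv.piEquivPiSubtypeProd (fun _ : ι => ℝ) (· = i0)).symm
    ((MeasurableEquiv.funUnique { i : ι // i = i0 } ℝ).symm p.1, p.2)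

open scoped Classical in
lemma splitMap_apply {ι : Type*} (i0 : ι) (a : ℝ) (g : { i : ι // ¬ i = i0 } → ℝ) (w : ι) :
    splitMap i0 (a, g) w = if h : w = i0 then a else g ⟨w, h⟩ := by
  simp [splitMap, MeasurableEquiv.piEquivPiSubtypeProd, MeasurableEquiv.funUnique,
    Equiv.piEquivPiSubtypeProd, Equiv.funUnique]

open scoped Classical in
lemma splitMap_measurePreserving {ι : Type*} [Fintype ι] (i0 : ι) :
    MeasurePreserving (splitMap i0)
      (unifMeasure.prod (Measure.pi fun _ : { i : ι // ¬ i = i0 } => unifMeasure))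
      (Measure.pi fun _ : ι => unifMeasure) := by
  have h1 := (measurePreserving_piEquivPiSubtypeProd
    (fun _ : ι => unifMeasure) (· = i0)).symm
  have h2 := (measurePreserving_funUnique unifMeasure { i : ι // i = i0 }).symm
  have h3 := h2.prod (MeasurePreserving.id
    (Measure.pi fun _ : { i : ι // ¬ i = i0 } => unifMeasure))
  refine h1.comp ?_
  convert h3 using 3 <;> first | rfl | exact Subsingleton.elim _ _

end SplitLemmas
section MatrixLemmas
open MeasureTheory Set

variable {V : Type*} [Fintype V]

lemma matrix_pow_nonneg (N : InfoNetwork V) [DecidableEq V] :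
    ∀ (t : ℕ) (u w : V), 0 ≤ (Matrix.of N.b ^ t) u w := by
  intro t
  induction t with
  | zero =>
    intro u w
    rw [pow_zero, Matrix.one_apply]
    split_ifs <;> norm_num
  | succ t ih =>
    intro u w
    rw [pow_succ', Matrix.mul_apply]
    exact Finset.sum_nonneg fun j _ => mul_nonneg (N.b_nonneg u j) (ih j w)

lemma matrix_pow_d (N : InfoNetwork V) [DecidableEq V] :
    ∀ (t : ℕ) (w : V), (Matrix.of N.b ^ t) N.d w = if w = N.d then 1 else 0 := by
  intro t
  induction t with
  | zero =>
    intro w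
    rw [pow_zero, Matrix.one_apply]
    by_cases h : w = N.d
    · simp [h]
    · rw [if_neg (fun hh : N.d = w => h hh.symm), if_neg h]
  | succ t ih =>
    intro w
    rw [pow_succ', Matrix.mul_apply]
    rw [Finset.sum_eq_single N.d]
    · rw [Matrix.of_apply, N.void_loop, one_mul, ih w]
    · intro j _ hj
      rw [Matrix.of_apply, N.b_d_eq hj, zero_mul]
    · intro h
      exact absurd (Finset.mem_univ N.d) h

lemma sum_indicator_step (N : InfoNetwork V) [DecidableEq V] (C : Set V) (t : ℕ) (v : V) :
    ∑ u : V, N.b v u * (∑ w : V, C.indicator ((Matrix.of N.b ^ t) u) w) =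
      ∑ w : V, C.indicator ((Matrix.of N.b ^ (t+1)) v) w := by
  classical
  have h1 : ∀ u : V, N.b v u * (∑ w : V, C.indicator ((Matrix.of N.b ^ t) u) w) =
      ∑ w : V, N.b v u * C.indicator ((Matrix.of N.b ^ t) u) w := fun u => Finset.mul_sum _ _ _
  rw [Finset.sum_congr rfl fun u _ => h1 u, Finset.sum_comm]
  refine Finset.sum_congr rfl fun w _ => ?_
  by_cases hw : w ∈ C
  · rw [Set.indicator_of_mem hw]
    rw [Finset.sum_congr rfl fun u _ => by rw [Set.indicator_of_mem hw]]
    rw [pow_succ', Matrix.mul_apply]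
    rfl
  · rw [Set.indicator_of_notMem hw]
    rw [Finset.sum_congr rfl fun u _ => by rw [Set.indicator_of_notMem hw, mul_zero]]
    simp

end MatrixLemmas
section MainProof
open MeasureTheory Set

variable {V : Type*} [Fintype V] [LinearOrder V]

lemma measurableSet_pePath_memC (N : InfoNetwork V) (T : ℕ) (A : Set V) (C : Set V)
    (t : ℕ) (u : V) :
    MeasurableSet {ω : (V → ℝ) × (V × Fin T → ℝ) | pePath N T A ω.1 ω.2 t u 0 ∈ C} := by
  have : {ω : (V → ℝ) × (V × Fin T → ℝ) | pePath N T A ω.1 ω.2 t u 0 ∈ C} =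
      ⋃ (a : V) (_ : a ∈ C), {ω : (V → ℝ) × (V × Fin T → ℝ) |
        pePath N T A ω.1 ω.2 t u 0 = a} := by
    ext ω
    simp only [Set.mem_iUnion, Set.mem_setOf_eq, exists_prop]
    constructor
    · intro h; exact ⟨_, h, rfl⟩
    · rintro ⟨a, ha, hh⟩; rw [hh]; exact ha
  rw [this]
  exact MeasurableSet.iUnion fun a => MeasurableSet.iUnion fun _ =>
    measurableSet_pePath_fiber N T A t u 0 a

lemma pePath_zero_succ (N : InfoNetwork V) (T : ℕ) (A : Set V) (θ : V → ℝ)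
    (ξ : V × Fin T → ℝ) (t : ℕ) (v : V) :
    pePath N T A θ ξ (t+1) v 0 =
      pePath N T A θ ξ t (pePath N T A θ ξ (t+1) v (t+1)) 0 := by
  rw [pePath_succ_eq N T A θ ξ t v (t+1), if_pos rfl, pePath_succ_eq N T A θ ξ t v 0,
    if_neg (Nat.succ_ne_zero t).symm]

instance peMeasure_prob (V : Type*) [Fintype V] (T : ℕ) :
    IsProbabilityMeasure (peMeasure V T) := by
  unfold peMeasure
  infer_instance

open scoped Classical in
lemma peMain (N : InfoNetwork V) (hacyc : N.Acyclic) (T : ℕ) (A : Set V) (C : Set V) :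
    ∀ t, t ≤ T → ∀ v : V,
      peMeasure V T {ω | pePath N T A ω.1 ω.2 t v 0 ∈ C} =
        ENNReal.ofReal (∑ u, C.indicator ((Matrix.of N.b ^ t) v) u) := by
  intro t
  induction t with
  | zero =>
    intro _ v
    have h1 : {ω : (V → ℝ) × (V × Fin T → ℝ) | pePath N T A ω.1 ω.2 0 v 0 ∈ C} =
        if v ∈ C then Set.univ else ∅ := by
      split_ifs with h <;> ext ω <;> simp [pePath, h]
    have h2 : ∑ u : V, C.indicator ((Matrix.of N.b ^ 0) v) u = if v ∈ C then 1 else 0 := by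
      rw [pow_zero, Finset.sum_eq_single v]
      · by_cases h : v ∈ C
        · rw [Set.indicator_of_mem h, Matrix.one_apply_eq, if_pos h]
        · rw [Set.indicator_of_notMem h, if_neg h]
      · intro u _ hu
        by_cases h : u ∈ C
        · rw [Set.indicator_of_mem h, Matrix.one_apply_ne (fun hh => hu hh.symm)]
        · rw [Set.indicator_of_notMem h]
      · intro h; exact absurd (Finset.mem_univ v) h
    rw [h1, h2]
    split_ifs with h
    · simp
    · simp
  | succ t ih =>
    intro ht v
    have htT : t < T := lt_of_lt_of_le (Nat.lt_succ_self t) ht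
    have htle : t ≤ T := le_of_lt htT
    by_cases hvd : v = N.d
    · subst hvd
      have h1 : {ω : (V → ℝ) × (V × Fin T → ℝ) | pePath N T A ω.1 ω.2 (t+1) N.d 0 ∈ C} =
          if N.d ∈ C then Set.univ else ∅ := by
        split_ifs with h <;> ext ω <;> simp [pePath_d, h]
      have h2 : ∑ u : V, C.indicator ((Matrix.of N.b ^ (t+1)) N.d) u =
          if N.d ∈ C then 1 else 0 := by
        have hfun : (Matrix.of N.b ^ (t+1)) N.d = fun w => if w = N.d then (1:ℝ) else 0 :=
          funext (matrix_pow_d N (t+1))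
        rw [hfun, Finset.sum_eq_single N.d]
        · by_cases h : N.d ∈ C
          · rw [Set.indicator_of_mem h, if_pos rfl, if_pos h]
          · rw [Set.indicator_of_notMem h, if_neg h]
        · intro u _ hu
          by_cases h : u ∈ C
          · rw [Set.indicator_of_mem h, if_neg hu]
          · rw [Set.indicator_of_notMem h]
        · intro h; exact absurd (Finset.mem_univ N.d) h
      rw [h1, h2]
      split_ifs with h
      · simp
      · simp
    · -- main case : v ≠ d
      set k0 : V × Fin T := (v, ⟨t, htT⟩) with hk0
      set μΘ := Measure.pi fun _ : { w : V // ¬ w = v } => unifMeasure with hμΘ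
      set μΞ := Measure.pi fun _ : { q : V × Fin T // ¬ q = k0 } => unifMeasure with hμΞ
      have hm1 : MeasurePreserving (splitMap v)
          (unifMeasure.prod μΘ) (Measure.pi fun _ : V => unifMeasure) := by
        convert splitMap_measurePreserving v using 2
        rw [hμΘ]
        congr!
      have hm2 : MeasurePreserving (splitMap k0)
          (unifMeasure.prod μΞ) (Measure.pi fun _ : V × Fin T => unifMeasure) := by
        convert splitMap_measurePreserving k0 using 2
        rw [hμΞ]
        congr!
      have hswp := MeasureTheory.Measure.measurePreserving_swap (μ := μΘ.prod μΞ) (ν := unifMeasure.prod unifMeasure)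
      have ha1 := measurePreserving_prodAssoc unifMeasure unifMeasure (μΘ.prod μΞ)
      have hτ1 := (measurePreserving_prodAssoc unifMeasure μΘ μΞ).symm
        MeasurableEquiv.prodAssoc
      have hτ2 := (MeasureTheory.Measure.measurePreserving_swap (μ := unifMeasure) (ν := μΘ)).prod
        (MeasurePreserving.id μΞ)
      have hτ3 := measurePreserving_prodAssoc μΘ unifMeasure μΞ
      have hτ := (hτ3.comp hτ2).comp hτ1
      have hmid := (MeasurePreserving.id unifMeasure).prod hτ
      have ha2 := (measurePreserving_prodAssoc unifMeasure μΘ (unifMeasure.prod μΞ)).symm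
        MeasurableEquiv.prodAssoc
      have hσ := ha2.comp (hmid.comp (ha1.comp hswp))
      set mFull : ((({ w : V // ¬ w = v } → ℝ) × ({ q : V × Fin T // ¬ q = k0 } → ℝ)) × ℝ × ℝ)
          → (V → ℝ) × (V × Fin T → ℝ) :=
        fun p => (splitMap v (p.2.1, p.1.1), splitMap k0 (p.2.2, p.1.2)) with hmFull
      have hν : peMeasure V T = (Measure.pi fun _ : V => unifMeasure).prod
          (Measure.pi fun _ : V × Fin T => unifMeasure) := rfl
      have hMP : MeasurePreserving mFull
          ((μΘ.prod μΞ).prod (unifMeasure.prod unifMeasure)) (peMeasure V T) := by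
        rw [hν]
        convert (hm1.prod hm2).comp hσ using 1
        rfl
      set Su : V → Set ((V → ℝ) × (V × Fin T → ℝ)) := fun u =>
        {ω : (V → ℝ) × (V × Fin T → ℝ) | pePath N T A ω.1 ω.2 (t+1) v (t+1) = u} ∩
        {ω : (V → ℝ) × (V × Fin T → ℝ) | pePath N T A ω.1 ω.2 t u 0 ∈ C} with hSu
      have hSumeas : ∀ u, MeasurableSet (Su u) := fun u =>
        (measurableSet_pePath_fiber N T A (t+1) v (t+1) u).inter
          (measurableSet_pePath_memC N T A C t u)
      have hEeq : {ω : (V → ℝ) × (V × Fin T → ℝ) | pePath N T A ω.1 ω.2 (t+1) v 0 ∈ C} =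
          ⋃ u : V, Su u := by
        ext ω
        simp only [Set.mem_iUnion, hSu, Set.mem_inter_iff, Set.mem_setOf_eq]
        constructor
        · intro hω
          refine ⟨pePath N T A ω.1 ω.2 (t+1) v (t+1), rfl, ?_⟩
          rw [← pePath_zero_succ]
          exact hω
        · rintro ⟨u, hu, hC⟩
          rw [pePath_zero_succ N T A ω.1 ω.2 t v, hu]
          exact hC
      have hdisj : Pairwise (Function.onFun Disjoint Su) := by
        intro u1 u2 hne
        simp only [Function.onFun, hSu]
        refine Set.disjoint_left.2 ?_
        rintro ω ⟨h1, _⟩ ⟨h2, _⟩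
        exact hne (h1.symm.trans h2)
      -- the key per-node computation
      have hkey : ∀ u : V, peMeasure V T (Su u) =
          ENNReal.ofReal (N.b v u) *
            ENNReal.ofReal (∑ w, C.indicator ((Matrix.of N.b ^ t) u) w) := by
        intro u
        by_cases hcase : 0 < N.b v u ∨ u = N.d
        · have hnr : ¬ Relation.ReflTransGen N.pr u v := N.not_reach hacyc hvd hcase
          have hindep : ∀ (g : { w : V // ¬ w = v } → ℝ)
              (hh : { q : V × Fin T // ¬ q = k0 } → ℝ) (a x : ℝ) (w : V),
              ¬ Relation.ReflTransGen N.pr w v →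
              pePath N T A (splitMap v (a, g)) (splitMap k0 (x, hh)) t w 0 =
              pePath N T A (splitMap v (0, g)) (splitMap k0 (0, hh)) t w 0 := by
            intro g hh a x w hw
            refine pePath_congr N T A t w ?_ ?_ 0
            · intro w' hw'
              have hwv : ¬ w' = v := fun hh' => hw (hh' ▸ hw')
              simp only [splitMap_apply, dif_neg hwv]
            · intro w' i hw'
              have hwv : ¬ w' = v := fun hh' => hw (hh' ▸ hw')
              have hqk : ¬ ((w', i) : V × Fin T) = k0 := by
                intro hq
                exact hwv (by rw [hk0] at hq; exact congrArg Prod.fst hq)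
              simp only [splitMap_apply, dif_neg hqk]
          set ccond : Set ((({ w : V // ¬ w = v } → ℝ) ×
              ({ q : V × Fin T // ¬ q = k0 } → ℝ))) :=
            {r | pePath N T A (splitMap v (0, r.1)) (splitMap k0 (0, r.2)) t u 0 ∈ C}
            with hccond
          set Sfin : (({ w : V // ¬ w = v } → ℝ) × ({ q : V × Fin T // ¬ q = k0 } → ℝ))
              → Finset V :=
            fun r => (Finset.univ.filter fun w => 0 < N.b v w).filter
              (fun w => pePath N T A (splitMap v (0, r.1)) (splitMap k0 (0, r.2)) t w 0 ∈ A)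
            with hSfin
          have hSfinpos : ∀ r w, w ∈ Sfin r → 0 < N.b v w := by
            intro r w hw
            have := (Finset.mem_filter.1 hw).1
            simpa using this
          have hU : ∀ (g : { w : V // ¬ w = v } → ℝ)
              (hh : { q : V × Fin T // ¬ q = k0 } → ℝ) (a x : ℝ),
              pePath N T A (splitMap v (a, g)) (splitMap k0 (x, hh)) (t+1) v (t+1) =
                Uof N v (Sfin (g, hh)) a x := by
            intro g hh a x
            rw [pePath_succ_eq, if_pos rfl, dif_pos htT]
            have h1 : splitMap v (a, g) v = a := by rw [splitMap_apply, dif_pos rfl]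
            have h2 : splitMap k0 (x, hh) (v, ⟨t, htT⟩) = x := by
              rw [splitMap_apply, dif_pos hk0.symm]
            have h3 : (Finset.univ.filter fun w => 0 < N.b v w).filter
                (fun w => pePath N T A (splitMap v (a, g)) (splitMap k0 (x, hh)) t w 0 ∈ A)
                = Sfin (g, hh) := by
              rw [hSfin]
              ext w
              simp only [Finset.mem_filter, Finset.mem_univ, true_and]
              constructor
              · rintro ⟨hb, hmem⟩
                rw [hindep g hh a x w (N.not_reach hacyc hvd (Or.inl hb))] at hmem
                exact ⟨hb, hmem⟩
              · rintro ⟨hb, hmem⟩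
                rw [← hindep g hh a x w (N.not_reach hacyc hvd (Or.inl hb))] at hmem
                exact ⟨hb, hmem⟩
            rw [h1, h2, h3]
          have hpre : mFull ⁻¹' (Su u) =
              {p : ((({ w : V // ¬ w = v } → ℝ) × ({ q : V × Fin T // ¬ q = k0 } → ℝ)) × ℝ × ℝ)
                | Uof N v (Sfin p.1) p.2.1 p.2.2 = u ∧ p.1 ∈ ccond} := by
            ext ⟨⟨g, hh⟩, a, x⟩
            simp only [Set.mem_preimage, hSu, hmFull, Set.mem_inter_iff, Set.mem_setOf_eq,
              hccond]
            rw [hU g hh a x, hindep g hh a x u hnr]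
          have hGmeas := measurableSet_pePath_memC N T A C t u
          have hpreG : mFull ⁻¹' {ω : (V → ℝ) × (V × Fin T → ℝ) |
              pePath N T A ω.1 ω.2 t u 0 ∈ C} = ccond ×ˢ Set.univ := by
            ext ⟨⟨g, hh⟩, a, x⟩
            simp only [Set.mem_preimage, Set.mem_prod, Set.mem_univ, and_true,
              Set.mem_setOf_eq, hccond, hmFull]
            rw [hindep g hh a x u hnr]
          have hccondmeas : MeasurableSet ccond := by
            have hι : Measurable (fun r : (({ w : V // ¬ w = v } → ℝ) ×
                ({ q : V × Fin T // ¬ q = k0 } → ℝ)) => mFull (r, ((0:ℝ), (0:ℝ)))) :=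
              hMP.measurable.comp (measurable_id.prodMk measurable_const)
            have hcc : ccond = (fun r : (({ w : V // ¬ w = v } → ℝ) ×
                ({ q : V × Fin T // ¬ q = k0 } → ℝ)) => mFull (r, ((0:ℝ), (0:ℝ)))) ⁻¹'
                {ω : (V → ℝ) × (V × Fin T → ℝ) | pePath N T A ω.1 ω.2 t u 0 ∈ C} := rfl
            rw [hcc]
            exact hι hGmeas
          have hGval : peMeasure V T {ω : (V → ℝ) × (V × Fin T → ℝ) |
              pePath N T A ω.1 ω.2 t u 0 ∈ C} = (μΘ.prod μΞ) ccond := by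
            rw [← hMP.measure_preimage hGmeas.nullMeasurableSet, hpreG,
              Measure.prod_prod, measure_univ, mul_one]
          have hBmeas : MeasurableSet
              {p : ((({ w : V // ¬ w = v } → ℝ) × ({ q : V × Fin T // ¬ q = k0 } → ℝ)) × ℝ × ℝ)
                | Uof N v (Sfin p.1) p.2.1 p.2.2 = u ∧ p.1 ∈ ccond} := by
            rw [← hpre]
            exact hMP.measurable (hSumeas u)
          have hslice : ∀ r, (unifMeasure.prod unifMeasure)
              (Prod.mk r ⁻¹'
                {p : ((({ w : V // ¬ w = v } → ℝ) × ({ q : V × Fin T // ¬ q = k0 } → ℝ)) × ℝ × ℝ)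
                  | Uof N v (Sfin p.1) p.2.1 p.2.2 = u ∧ p.1 ∈ ccond}) =
              ccond.indicator (fun _ => ENNReal.ofReal (N.b v u)) r := by
            intro r
            by_cases hr : r ∈ ccond
            · rw [Set.indicator_of_mem hr]
              have hset : Prod.mk r ⁻¹'
                  {p : ((({ w : V // ¬ w = v } → ℝ) ×
                    ({ q : V × Fin T // ¬ q = k0 } → ℝ)) × ℝ × ℝ)
                    | Uof N v (Sfin p.1) p.2.1 p.2.2 = u ∧ p.1 ∈ ccond} =
                  {q : ℝ × ℝ | Uof N v (Sfin r) q.1 q.2 = u} := by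
                ext q
                simp [hr]
              rw [hset]
              exact Uof_slice N v (Sfin r) (hSfinpos r) u
            · rw [Set.indicator_of_notMem hr]
              have hset : Prod.mk r ⁻¹'
                  {p : ((({ w : V // ¬ w = v } → ℝ) ×
                    ({ q : V × Fin T // ¬ q = k0 } → ℝ)) × ℝ × ℝ)
                    | Uof N v (Sfin p.1) p.2.1 p.2.2 = u ∧ p.1 ∈ ccond} = ∅ := by
                ext q
                simp [hr]
              rw [hset, measure_empty]
          calc peMeasure V T (Su u)
              = ((μΘ.prod μΞ).prod (unifMeasure.prod unifMeasure)) (mFull ⁻¹' (Su u)) :=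
                (hMP.measure_preimage (hSumeas u).nullMeasurableSet).symm
            _ = ∫⁻ r, (unifMeasure.prod unifMeasure)
                  (Prod.mk r ⁻¹'
                    {p : ((({ w : V // ¬ w = v } → ℝ) ×
                      ({ q : V × Fin T // ¬ q = k0 } → ℝ)) × ℝ × ℝ)
                      | Uof N v (Sfin p.1) p.2.1 p.2.2 = u ∧ p.1 ∈ ccond}) ∂(μΘ.prod μΞ) := by
                rw [hpre, Measure.prod_apply hBmeas]
            _ = ∫⁻ r, ccond.indicator (fun _ => ENNReal.ofReal (N.b v u)) r ∂(μΘ.prod μΞ) :=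
                lintegral_congr hslice
            _ = ENNReal.ofReal (N.b v u) * (μΘ.prod μΞ) ccond := by
                rw [lintegral_indicator hccondmeas, setLIntegral_const]
            _ = ENNReal.ofReal (N.b v u) *
                  ENNReal.ofReal (∑ w, C.indicator ((Matrix.of N.b ^ t) u) w) := by
                rw [← hGval, ih htle u]
        · push_neg at hcase
          obtain ⟨hb, hd⟩ := hcase
          have hb0 : N.b v u = 0 := le_antisymm hb (N.b_nonneg v u)
          have hempty : Su u = ∅ := by
            ext ω
            simp only [hSu, Set.mem_inter_iff, Set.mem_setOf_eq, Set.mem_empty_iff_false,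
              iff_false, not_and]
            intro h1 _
            rw [pePath_succ_eq, if_pos rfl] at h1
            have hpos : ∀ w ∈ (Finset.univ.filter fun w => 0 < N.b v w).filter
                (fun w => pePath N T A ω.1 ω.2 t w 0 ∈ A), 0 < N.b v w := by
              intro w hw
              have := (Finset.mem_filter.1 hw).1
              simpa using this
            rcases Uof_cases N v _ hpos (ω.1 v) (if h : t < T then ω.2 (v, ⟨t, h⟩) else 0)
              with hg | hg
            · rw [h1] at hg
              exact absurd hg (not_lt.2 hb)
            · rw [h1] at hg
              exact hd hg
          rw [hempty, measure_empty, hb0]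
          simp
      rw [hEeq, measure_iUnion hdisj hSumeas, tsum_fintype]
      have hterm : ∀ u : V, peMeasure V T (Su u) =
          ENNReal.ofReal (N.b v u * ∑ w, C.indicator ((Matrix.of N.b ^ t) u) w) := by
        intro u
        rw [hkey u, ← ENNReal.ofReal_mul (N.b_nonneg v u)]
      rw [Finset.sum_congr rfl fun u _ => hterm u]
      rw [← ENNReal.ofReal_sum_of_nonneg]
      · rw [sum_indicator_step]
      · intro u _
        refine mul_nonneg (N.b_nonneg v u) (Finset.sum_nonneg fun w _ => ?_)
        by_cases hw : w ∈ C
        · rw [Set.indicator_of_mem hw]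
          exact matrix_pow_nonneg N t u w
        · rw [Set.indicator_of_notMem hw]

end MainProof

/-- in the Path-Effect process on an acyclic network, for every subset `C`,
every non-void node `v` and every `0 ≤ t ≤ T`, the probability that `P^t_v[0] ∈ C` equals
`∑_{u ∈ C} (b^t) v u`, the probability that the Markov chain with transition matrix `b`
started at `v` is in `C` at time `t`; in particular it does not depend on the transient
initial set `A`. -/
theorem pePath_source_prob {V : Type*} [Fintype V] [LinearOrder V] (N : InfoNetwork V)
    (hacyc : N.Acyclic) (T : ℕ) (A : Set V) (hA : A ⊆ {x : V | x ≠ N.d})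
    (C : Set V) (v : V) (hv : v ≠ N.d) (t : ℕ) (htT : t ≤ T) :
    peMeasure V T {ω | pePath N T A ω.1 ω.2 t v 0 ∈ C} =
      ENNReal.ofReal (∑ u, C.indicator ((Matrix.of N.b ^ t) v) u) :=
  peMain N hacyc T A C t htT v
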